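/- Let U be a finite vertex set with |U| = N, let A ⊆ U × U be a finite arc set, let β ≥ 1 and L > 0, and suppose that every subset R ⊆ U with ∅ ≠ R ≠ U and β·|∂⁺R| ≥ |∂R| satisfies |∂⁺R| ≥ L·min{|R|, |U∖R|}. Sample each arc of A independently with probability p ∈ [0,1]. Then the probability that there exists a subset R ⊆ U with ∅ ≠ R ≠ U and β·|∂⁺R| ≥ |∂R| such that no arc of ∂⁺R is sampled is at most Σ_{k=1}^{⌊N/2⌋} 2·N^k·(1−p)^{kL}. -/

import Mathlib

open Finset MeasureTheory
open scoped ENNReal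

open scoped Classical in
/-- The out-boundary `∂⁺R`: arcs `(u,v) ∈ A` with `u ∈ R` and `v ∉ R`. -/
noncomputable def outBoundary {U : Type*} (A : Finset (U × U)) (R : Finset U) :
    Finset (U × U) :=
  A.filter fun e => e.1 ∈ R ∧ e.2 ∉ R

open scoped Classical in
/-- The boundary `∂R`: arcs `(u,v) ∈ A` with exactly one endpoint in `R`. -/
noncomputable def boundary {U : Type*} (A : Finset (U × U)) (R : Finset U) :
    Finset (U × U) :=
  A.filter fun e => (e.1 ∈ R ∧ e.2 ∉ R) ∨ (e.2 ∈ R ∧ e.1 ∉ R)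

/-- **Sampling out-arcs of balanced cuts.** Let `U` be a finite vertex set with
`|U| = N`, `A ⊆ U × U` an arc set, `β ≥ 1`, `L > 0`, and suppose every nontrivial cut
`R` with `β·|∂⁺R| ≥ |∂R|` satisfies `|∂⁺R| ≥ L·min{|R|, |U∖R|}`. Sampling each arc of
`A` independently with probability `p`, the probability that some nontrivial cut `R`
with `β·|∂⁺R| ≥ |∂R|` has no sampled out-arc is at most
`∑_{k=1}^{⌊N/2⌋} 2·N^k·(1-p)^{kL}`. -/
theorem sparsifier_failure_probability {U : Type*} [Fintype U] [DecidableEq U] (N : ℕ)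
    (hN : Fintype.card U = N) (A : Finset (U × U)) (β L : ℝ) (hβ : 1 ≤ β) (hL : 0 < L)
    (p : ℝ≥0∞) (hp : p ≤ 1)
    (hexp : ∀ R : Finset U, R ≠ ∅ → R ≠ Finset.univ →
      β * ((outBoundary A R).card : ℝ) ≥ ((boundary A R).card : ℝ) →
      ((outBoundary A R).card : ℝ)
        ≥ L * min (R.card : ℝ) ((Finset.univ \ R).card : ℝ)) :
    (Measure.pi fun _ : A => (PMF.bernoulli p.toNNReal
      (by simpa using ENNReal.toNNReal_mono ENNReal.one_ne_top hp)).toMeasure)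
      {ω : A → Bool | ∃ R : Finset U, R ≠ ∅ ∧ R ≠ Finset.univ ∧
        β * ((outBoundary A R).card : ℝ) ≥ ((boundary A R).card : ℝ) ∧
        ∀ a : A, (a : U × U) ∈ outBoundary A R → ω a = false}
      ≤ ENNReal.ofReal
        (∑ k ∈ Finset.Icc 1 (N / 2), 2 * (N : ℝ) ^ k * (1 - p.toReal) ^ ((k : ℝ) * L)) := by
  classical
  subst hN
  set N := Fintype.card U with hNdef
  set ν := (PMF.toMeasure (PMF.bernoulli p.toNNReal
    (by simpa using ENNReal.toNNReal_mono ENNReal.one_ne_top hp))) with hν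
  set μ := Measure.pi fun _ : A => ν with hμ
  set x : ℝ≥0∞ := 1 - p with hx
  have hx1 : x ≤ 1 := tsub_le_self
  have hxt : x ≠ ⊤ := (hx1.trans_lt ENNReal.one_lt_top).ne
  have hxreal : x.toReal = 1 - p.toReal := by
    rw [hx, ENNReal.toReal_sub_of_le hp ENNReal.one_ne_top, ENNReal.toReal_one]
  have hxreal_nonneg : 0 ≤ x.toReal := ENNReal.toReal_nonneg
  -- measure of the "all arcs in s unsampled" event
  have key : ∀ s : Finset (U × U), s ⊆ A →
      μ {ω : A → Bool | ∀ a : A, (a : U × U) ∈ s → ω a = false} = x ^ s.card := by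
    intro s hs
    have hset : {ω : A → Bool | ∀ a : A, (a : U × U) ∈ s → ω a = false}
        = Set.pi Set.univ (fun a : A =>
            if (a : U × U) ∈ s then ({false} : Set Bool) else Set.univ) := by
      ext ω
      simp only [Set.mem_setOf_eq, Set.mem_pi, Set.mem_univ, true_implies]
      constructor
      · intro h a
        by_cases ha : (a : U × U) ∈ s
        · simp [ha, h a ha]
        · simp [ha]
      · intro h a ha
        have := h a
        simpa [ha] using this
    have hνuniv : ν Set.univ = 1 := measure_univ
    have hνfalse : ν ({false} : Set Bool) = x := by
      rw [hν, PMF.toMeasure_apply_singleton _ _ (measurableSet_singleton _)]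
      change (1 : ℝ≥0∞) - ((p.toNNReal : NNReal) : ℝ≥0∞) = x
      rw [ENNReal.coe_toNNReal (hp.trans_lt ENNReal.one_lt_top).ne]
    have hcard : (Finset.univ.filter fun a : A => (a : U × U) ∈ s).card = s.card := by
      refine Finset.card_bij (fun a _ => (a : U × U)) ?_ ?_ ?_
      · intro a ha; simpa using (Finset.mem_filter.mp ha).2
      · intro a _ b _ h; exact Subtype.ext h
      · intro e he; exact ⟨⟨e, hs he⟩, by simp [he], rfl⟩
    rw [hset, hμ, Measure.pi_pi]
    calc (∏ a : A, ν (if (a : U × U) ∈ s then ({false} : Set Bool) else Set.univ))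
        = ∏ a : A, (if (a : U × U) ∈ s then x else 1) := by
          refine Finset.prod_congr rfl fun a _ => ?_
          split_ifs with h
          · exact hνfalse
          · exact hνuniv
      _ = x ^ s.card := by
          rw [Finset.prod_ite, Finset.prod_const, Finset.prod_const, one_pow, mul_one, hcard]
  -- the set of bad cuts
  set S : Finset (Finset U) := Finset.univ.filter (fun R => R ≠ ∅ ∧ R ≠ Finset.univ ∧
      β * ((outBoundary A R).card : ℝ) ≥ ((boundary A R).card : ℝ)) with hS
  set kf : Finset U → ℕ := fun R => min R.card (N - R.card) with hkf
  -- per-cut bound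
  have hbound : ∀ R ∈ S,
      μ {ω : A → Bool | ∀ a : A, (a : U × U) ∈ outBoundary A R → ω a = false}
        ≤ ENNReal.ofReal ((1 - p.toReal) ^ ((kf R : ℝ) * L)) := by
    intro R hR
    rw [hS, Finset.mem_filter] at hR
    obtain ⟨-, h1, h2, h3⟩ := hR
    have hminR : (Finset.univ \ R).card = N - R.card := by
      rw [Finset.card_sdiff_of_subset (Finset.subset_univ R), Finset.card_univ]
    have h := hexp R h1 h2 h3
    rw [hminR, ← Nat.cast_min] at h
    have hexpo : (kf R : ℝ) * L ≤ ((outBoundary A R).card : ℕ) := by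
      rw [mul_comm]; exact h
    have hz : 0 ≤ (kf R : ℝ) * L := mul_nonneg (Nat.cast_nonneg _) hL.le
    have hsubA : outBoundary A R ⊆ A := by
      intro e he
      simp only [outBoundary, Finset.mem_filter] at he
      exact he.1
    rw [key (outBoundary A R) hsubA]
    calc x ^ (outBoundary A R).card
        = x ^ (((outBoundary A R).card : ℕ) : ℝ) := (ENNReal.rpow_natCast _ _).symm
      _ ≤ x ^ ((kf R : ℝ) * L) := ENNReal.rpow_le_rpow_of_exponent_ge hx1 hexpo
      _ = ENNReal.ofReal ((1 - p.toReal) ^ ((kf R : ℝ) * L)) := by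
          rw [← hxreal]
          conv_lhs => rw [← ENNReal.ofReal_toReal hxt]
          rw [ENNReal.ofReal_rpow_of_nonneg hxreal_nonneg hz]
  -- union bound
  have hsub : {ω : A → Bool | ∃ R : Finset U, R ≠ ∅ ∧ R ≠ Finset.univ ∧
        β * ((outBoundary A R).card : ℝ) ≥ ((boundary A R).card : ℝ) ∧
        ∀ a : A, (a : U × U) ∈ outBoundary A R → ω a = false}
      ⊆ ⋃ R ∈ S, {ω : A → Bool | ∀ a : A, (a : U × U) ∈ outBoundary A R → ω a = false} := by
    rintro ω ⟨R, h1, h2, h3, h4⟩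
    have hRS : R ∈ S := by
      rw [hS, Finset.mem_filter]
      exact ⟨Finset.mem_univ R, h1, h2, h3⟩
    exact Set.mem_biUnion hRS h4
  refine le_trans (measure_mono hsub) ?_
  refine le_trans (measure_biUnion_finset_le S _) ?_
  refine le_trans (Finset.sum_le_sum hbound) ?_
  rw [← ENNReal.ofReal_sum_of_nonneg
    (fun R _ => Real.rpow_nonneg (by linarith [ENNReal.toReal_nonneg (a := p), hxreal]) _)]
  refine ENNReal.ofReal_le_ofReal ?_
  -- real counting estimate
  have hmaps : ∀ R ∈ S, kf R ∈ Finset.Icc 1 (N / 2) := by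
    intro R hR
    rw [hS, Finset.mem_filter] at hR
    obtain ⟨-, h1, h2, -⟩ := hR
    have hc1 : 1 ≤ R.card := Finset.card_pos.2 (Finset.nonempty_iff_ne_empty.2 h1)
    have hc2 : R.card < N := by
      rw [hNdef, ← Finset.card_univ]
      exact Finset.card_lt_card ((Finset.subset_univ R).ssubset_of_ne h2)
    rw [Finset.mem_Icc, hkf]
    have hRle : R.card ≤ N := hc2.le
    rcases min_cases R.card (N - R.card) with ⟨hm, hm'⟩ | ⟨hm, hm'⟩ <;>
      simp only [hm] <;> omega
  rw [← Finset.sum_fiberwise_of_maps_to hmaps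
    (fun R => (1 - p.toReal) ^ ((kf R : ℝ) * L))]
  refine Finset.sum_le_sum fun k hk => ?_
  rw [Finset.mem_Icc] at hk
  have hgnonneg : 0 ≤ (1 - p.toReal) ^ ((k : ℝ) * L) :=
    Real.rpow_nonneg (by linarith [ENNReal.toReal_nonneg (a := p), hxreal]) _
  have hfibcard : (S.filter fun R => kf R = k).card ≤ 2 * N ^ k := by
    have hsubfib : (S.filter fun R => kf R = k)
        ⊆ Finset.powersetCard k Finset.univ ∪ Finset.powersetCard (N - k) Finset.univ := by
      intro R hR
      rw [Finset.mem_filter] at hR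
      have hRle : R.card ≤ N := by rw [hNdef, ← Finset.card_univ]; exact Finset.card_le_univ R
      have : R.card = k ∨ R.card = N - k := by
        have h2 := hR.2
        simp only [hkf] at h2
        rcases min_cases R.card (N - R.card) with ⟨hm, hm'⟩ | ⟨hm, hm'⟩ <;>
          rw [hm] at h2 <;> omega
      rcases this with h | h
      · exact Finset.mem_union_left _ (Finset.mem_powersetCard_univ.2 h)
      · exact Finset.mem_union_right _ (Finset.mem_powersetCard_univ.2 h)
    calc (S.filter fun R => kf R = k).card
        ≤ (Finset.powersetCard k (Finset.univ : Finset U)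
            ∪ Finset.powersetCard (N - k) Finset.univ).card := Finset.card_le_card hsubfib
      _ ≤ (Finset.powersetCard k (Finset.univ : Finset U)).card
            + (Finset.powersetCard (N - k) (Finset.univ : Finset U)).card :=
          Finset.card_union_le _ _
      _ = N.choose k + N.choose (N - k) := by
          rw [Finset.card_powersetCard, Finset.card_powersetCard, Finset.card_univ]
      _ = 2 * N.choose k := by
          rw [Nat.choose_symm (by omega : k ≤ N)]; ring
      _ ≤ 2 * N ^ k := by
          have := Nat.choose_le_pow N k
          omega
  calc (∑ R ∈ S.filter fun R => kf R = k, (1 - p.toReal) ^ ((kf R : ℝ) * L))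
      = (S.filter fun R => kf R = k).card * (1 - p.toReal) ^ ((k : ℝ) * L) := by
        rw [Finset.sum_congr rfl (fun R hR => by
          rw [(Finset.mem_filter.mp hR).2]), Finset.sum_const, nsmul_eq_mul]
    _ ≤ (2 * (N : ℝ) ^ k) * (1 - p.toReal) ^ ((k : ℝ) * L) := by
        refine mul_le_mul_of_nonneg_right ?_ hgnonneg
        have : ((S.filter fun R => kf R = k).card : ℝ) ≤ ((2 * N ^ k : ℕ) : ℝ) :=
          Nat.cast_le.2 hfibcard
        push_cast at this
        linarith
    _ = 2 * (N : ℝ) ^ k * (1 - p.toReal) ^ ((k : ℝ) * L) := by ring
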